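/- Let S ⊂ ℝ² be bounded open, u ∈ C²(S̄, ℝ³) an isometric immersion (∂_α u · ∂_β u = δ_{αβ}) with normal n, second fundamental form Π, α ∈ C¹(S̄), g ∈ C¹(S̄, ℝ²), and set v^h(x', x₃) = u(x') + h[(x₃ + α(x'))n(x') + (g(x')·∇')u(x')] for (x', x₃) ∈ S × I. Let R(x') = (∇'u(x'), n(x')) ∈ SO(3). Then Rᵀ∇_h v^h = I + hG with G = ι(x₃Π + B) − e₃ ⊗ (b, 0) in block form, where B = ∇'g + αΠ, b = −∇'α + Πg, ∇_h v^h = (∇'v^h, (1/h)∂₃v^h), and ι embeds 2×2 matrices into the upper-left 3×3 block; here the (3,1) and (3,2) entries of G are −b₁, −b₂ and the remaining entries outside the upper-left block are 0. -/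

import Mathlib

open Matrix

noncomputable section

/-- Partial derivative of a vector field on ℝ². -/
def pd (β : Fin 2) (f : (Fin 2 → ℝ) → (Fin 3 → ℝ)) (z : Fin 2 → ℝ) : Fin 3 → ℝ :=
  fderiv ℝ f z (Pi.single β 1)

/-- The normal n = ∂₁u ∧ ∂₂u. -/
def nrm (u : (Fin 2 → ℝ) → (Fin 3 → ℝ)) (z : Fin 2 → ℝ) : Fin 3 → ℝ :=
  crossProduct (pd 0 u z) (pd 1 u z)

/-- The second fundamental form Π_{αβ} = ∂_α u · ∂_β n. -/
def sff (u : (Fin 2 → ℝ) → (Fin 3 → ℝ)) (z : Fin 2 → ℝ) : Matrix (Fin 2) (Fin 2) ℝ :=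
  Matrix.of fun a b => pd a u z ⬝ᵥ pd b (nrm u) z

/-- Schmidt's ansatz v^h(x',x₃) = u(x') + h[(x₃+α(x'))n(x') + (g(x')·∇')u(x')]. -/
def ansatz (u : (Fin 2 → ℝ) → (Fin 3 → ℝ)) (α : (Fin 2 → ℝ) → ℝ)
    (g : (Fin 2 → ℝ) → (Fin 2 → ℝ)) (h x3 : ℝ) (z : Fin 2 → ℝ) : Fin 3 → ℝ :=
  u z + h • ((x3 + α z) • nrm u z + g z 0 • pd 0 u z + g z 1 • pd 1 u z)

/-- The scaled gradient ∇_h v^h = (∂₁v^h, ∂₂v^h, (1/h)∂₃v^h) as a 3×3 matrix. -/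
def scaledGradAnsatz (u : (Fin 2 → ℝ) → (Fin 3 → ℝ)) (α : (Fin 2 → ℝ) → ℝ)
    (g : (Fin 2 → ℝ) → (Fin 2 → ℝ)) (h x3 : ℝ) (z : Fin 2 → ℝ) :
    Matrix (Fin 3) (Fin 3) ℝ :=
  Matrix.of fun i j =>
    (![pd 0 (fun z' => ansatz u α g h x3 z') z,
       pd 1 (fun z' => ansatz u α g h x3 z') z,
       (1 / h) • deriv (fun t => ansatz u α g h t z) x3] : Fin 3 → Fin 3 → ℝ) j i

/-- The frame R = (∂₁u, ∂₂u, n) (columns). -/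
def Rmat (u : (Fin 2 → ℝ) → (Fin 3 → ℝ)) (z : Fin 2 → ℝ) : Matrix (Fin 3) (Fin 3) ℝ :=
  Matrix.of fun i j => (![pd 0 u z, pd 1 u z, nrm u z]) j i

/-- B = ∇'g + αΠ. -/
def Bfield (u : (Fin 2 → ℝ) → (Fin 3 → ℝ)) (α : (Fin 2 → ℝ) → ℝ)
    (g : (Fin 2 → ℝ) → (Fin 2 → ℝ)) (z : Fin 2 → ℝ) : Matrix (Fin 2) (Fin 2) ℝ :=
  Matrix.of fun a b => fderiv ℝ g z (Pi.single b 1) a + α z * sff u z a b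

/-- b = −∇'α + Πg. -/
def bfield (u : (Fin 2 → ℝ) → (Fin 3 → ℝ)) (α : (Fin 2 → ℝ) → ℝ)
    (g : (Fin 2 → ℝ) → (Fin 2 → ℝ)) (z : Fin 2 → ℝ) : Fin 2 → ℝ :=
  fun a => -(fderiv ℝ α z (Pi.single a 1)) + ∑ b, sff u z a b * g z b

/-- G = ι(x₃Π + B) − e₃ ⊗ (b,0): upper-left block x₃Π + B, third row (−b₁, −b₂, 0),
third column zero. -/
def Gfield (u : (Fin 2 → ℝ) → (Fin 3 → ℝ)) (α : (Fin 2 → ℝ) → ℝ)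
    (g : (Fin 2 → ℝ) → (Fin 2 → ℝ)) (x3 : ℝ) (z : Fin 2 → ℝ) :
    Matrix (Fin 3) (Fin 3) ℝ :=
  let A := x3 • sff u z + Bfield u α g z
  Matrix.of ![![A 0 0, A 0 1, 0], ![A 1 0, A 1 1, 0],
    ![-(bfield u α g z 0), -(bfield u α g z 1), 0]]

section auxlemmas

variable {E : Type*} [NormedAddCommGroup E] [NormedSpace ℝ E]

lemma cross_dot_cross_self (v w : Fin 3 → ℝ) :
    (crossProduct v w) ⬝ᵥ (crossProduct v w)
      = (v ⬝ᵥ v) * (w ⬝ᵥ w) - (v ⬝ᵥ w) * (v ⬝ᵥ w) := by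
  simp [cross_apply, dotProduct, Fin.sum_univ_three]; ring

lemma diffAt_comp {n : ℕ} {f : E → Fin n → ℝ} {z : E} (i : Fin n)
    (hf : DifferentiableAt ℝ f z) : DifferentiableAt ℝ (fun w => f w i) z :=
  (differentiableAt_pi.mp hf) i

lemma fderiv_comp_apply {n : ℕ} {f : E → Fin n → ℝ} {z : E} (i : Fin n) (v : E)
    (hf : DifferentiableAt ℝ f z) :
    fderiv ℝ (fun w => f w i) z v = fderiv ℝ f z v i := by
  have h := ((ContinuousLinearMap.proj (R := ℝ) (φ := fun _ : Fin n => ℝ) i).hasFDerivAt.comp z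
    hf.hasFDerivAt).fderiv
  rw [show (fun w => f w i)
      = (⇑(ContinuousLinearMap.proj (R := ℝ) (φ := fun _ : Fin n => ℝ) i) ∘ f) from rfl, h]
  rfl

lemma fderiv_dot {f g : E → Fin 3 → ℝ} {z : E} (hf : DifferentiableAt ℝ f z)
    (hg : DifferentiableAt ℝ g z) (v : E) :
    fderiv ℝ (fun w => f w ⬝ᵥ g w) z v
      = fderiv ℝ f z v ⬝ᵥ g z + f z ⬝ᵥ fderiv ℝ g z v := by
  have hfi : ∀ i, DifferentiableAt ℝ (fun w => f w i) z := fun i => diffAt_comp i hf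
  have hgi : ∀ i, DifferentiableAt ℝ (fun w => g w i) z := fun i => diffAt_comp i hg
  have heq : (fun w => f w ⬝ᵥ g w) = fun w => ∑ i : Fin 3, f w i * g w i := rfl
  rw [heq, fderiv_fun_sum (A := fun i w => f w i * g w i) (fun i _ => ((hfi i).mul (hgi i)))]
  simp only [ContinuousLinearMap.sum_apply]
  rw [Fin.sum_univ_three]
  simp only [fderiv_fun_mul (hfi _) (hgi _), ContinuousLinearMap.add_apply,
    ContinuousLinearMap.smul_apply, smul_eq_mul,
    fderiv_comp_apply _ _ hf, fderiv_comp_apply _ _ hg]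
  simp [dotProduct, Fin.sum_univ_three]; ring

end auxlemmas

/-- Schmidt's algebraic identity for the recovery ansatz: for an isometric immersion u
and the deformation v^h given by `ansatz`, one has Rᵀ ∇_h v^h = I + h G, with G as in
`Gfield`. -/
theorem stmt19 (S : Set (Fin 2 → ℝ)) (hS : IsOpen S) (hSb : Bornology.IsBounded S)
    (u : (Fin 2 → ℝ) → (Fin 3 → ℝ)) (hu : ContDiffOn ℝ 2 u (closure S))
    (α : (Fin 2 → ℝ) → ℝ) (hα : ContDiffOn ℝ 1 α (closure S))
    (g : (Fin 2 → ℝ) → (Fin 2 → ℝ)) (hg : ContDiffOn ℝ 1 g (closure S))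
    (hiso : ∀ z ∈ S, ∀ a b : Fin 2,
      pd a u z ⬝ᵥ pd b u z = if a = b then (1 : ℝ) else 0) :
    ∀ h > (0:ℝ), ∀ z ∈ S, ∀ x3 ∈ Set.Ioo (-(1/2):ℝ) (1/2),
      (Rmat u z)ᵀ * scaledGradAnsatz u α g h x3 z
        = 1 + h • Gfield u α g x3 z := by
  intro h hh z hz x3 _
  have hzS : S ∈ nhds z := hS.mem_nhds hz
  have hcl : closure S ∈ nhds z := Filter.mem_of_superset hzS subset_closure
  have hu2 : ContDiffAt ℝ 2 u z := hu.contDiffAt hcl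
  have hα1 : DifferentiableAt ℝ α z := (hα.contDiffAt hcl).differentiableAt (by norm_num)
  have hg1 : DifferentiableAt ℝ g z := (hg.contDiffAt hcl).differentiableAt (by norm_num)
  have hud : DifferentiableAt ℝ u z := hu2.differentiableAt (by norm_num)
  have hfd : ContDiffAt ℝ 1 (fderiv ℝ u) z := hu2.fderiv_right (by norm_num)
  have hfdd : DifferentiableAt ℝ (fderiv ℝ u) z := hfd.differentiableAt (by norm_num)
  have hdpd : ∀ a : Fin 2, DifferentiableAt ℝ (pd a u) z := by
    intro a
    show DifferentiableAt ℝ (fun w => fderiv ℝ u w (Pi.single a 1)) z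
    exact hfdd.clm_apply (differentiableAt_const _)
  have hdn : DifferentiableAt ℝ (nrm u) z := by
    have c0 : ∀ j, DifferentiableAt ℝ (fun w => pd 0 u w j) z := fun j => diffAt_comp j (hdpd 0)
    have c1 : ∀ j, DifferentiableAt ℝ (fun w => pd 1 u w j) z := fun j => diffAt_comp j (hdpd 1)
    rw [differentiableAt_pi]
    intro i
    fin_cases i
    · exact ((c0 1).mul (c1 2)).sub ((c0 2).mul (c1 1))
    · exact ((c0 2).mul (c1 0)).sub ((c0 0).mul (c1 2))
    · exact ((c0 0).mul (c1 1)).sub ((c0 1).mul (c1 0))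
  -- derivative of functions constant on S vanishes
  have hconstS : ∀ (f : (Fin 2 → ℝ) → ℝ) (c : ℝ), (∀ w ∈ S, f w = c) →
      fderiv ℝ f z = 0 := by
    intro f c hfc
    have hev : f =ᶠ[nhds z] fun _ => c := Filter.eventuallyEq_of_mem hzS hfc
    rw [hev.fderiv_eq]
    simp
  -- tangential second derivatives vanish
  have hprod : ∀ a b c : Fin 2,
      pd b (pd a u) z ⬝ᵥ pd c u z + pd a u z ⬝ᵥ pd b (pd c u) z = 0 := by
    intro a b c
    have hd := fderiv_dot (hdpd a) (hdpd c) (Pi.single b 1)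
    have h0 : fderiv ℝ (fun w => pd a u w ⬝ᵥ pd c u w) z = 0 :=
      hconstS _ _ (fun w hw => hiso w hw a c)
    rw [h0] at hd
    simp only [ContinuousLinearMap.zero_apply] at hd
    simp only [pd] at *
    linarith [hd]
  have hsym : ∀ b c : Fin 2, pd b (pd c u) z = pd c (pd b u) z := by
    have hsnd := hu2.isSymmSndFDerivAt (by simp)
    have hev : ∀ (a d : Fin 2), pd a (pd d u) z
        = fderiv ℝ (fderiv ℝ u) z (Pi.single a 1) (Pi.single d 1) := by
      intro a d
      show fderiv ℝ (fun w => fderiv ℝ u w (Pi.single d 1)) z (Pi.single a 1) = _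
      rw [fderiv_clm_apply hfdd (differentiableAt_const (Pi.single d 1))]
      simp
    intro b c
    rw [hev b c, hev c b, hsnd]
  have hT : ∀ a b c : Fin 2, pd a u z ⬝ᵥ pd b (pd c u) z = 0 := by
    have hR : ∀ a b c : Fin 2,
        pd b (pd a u) z ⬝ᵥ pd c u z = -(pd b (pd c u) z ⬝ᵥ pd a u z) := by
      intro a b c
      have := hprod a b c
      rw [dotProduct_comm (pd a u z)] at this
      linarith
    intro a b c
    rw [dotProduct_comm]
    have t1 : pd b (pd c u) z ⬝ᵥ pd a u z = pd c (pd b u) z ⬝ᵥ pd a u z := by rw [hsym b c]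
    have t2 : pd c (pd a u) z ⬝ᵥ pd b u z = pd a (pd c u) z ⬝ᵥ pd b u z := by rw [hsym c a]
    have t3 : pd a (pd b u) z ⬝ᵥ pd c u z = pd b (pd a u) z ⬝ᵥ pd c u z := by rw [hsym a b]
    linarith [hR b c a, hR c a b, hR a b c, t1, t2, t3]
  have hN0 : ∀ a : Fin 2, pd a u z ⬝ᵥ nrm u z = 0 := by
    intro a
    fin_cases a
    · exact dot_self_cross _ _
    · exact dot_cross_self _ _
  have hNN : ∀ w ∈ S, nrm u w ⬝ᵥ nrm u w = 1 := by
    intro w hw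
    rw [nrm, cross_dot_cross_self, hiso w hw 0 0, hiso w hw 1 1, hiso w hw 0 1]
    norm_num
  have hNdN : ∀ b : Fin 2, nrm u z ⬝ᵥ pd b (nrm u) z = 0 := by
    intro b
    have hd := fderiv_dot hdn hdn (Pi.single b 1)
    have h0 : fderiv ℝ (fun w => nrm u w ⬝ᵥ nrm u w) z = 0 := hconstS _ _ hNN
    rw [h0] at hd
    simp only [ContinuousLinearMap.zero_apply] at hd
    rw [dotProduct_comm] at hd
    show nrm u z ⬝ᵥ fderiv ℝ (nrm u) z (Pi.single b 1) = 0
    linarith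
  have hNdd : ∀ b c : Fin 2, nrm u z ⬝ᵥ pd b (pd c u) z = -(sff u z c b) := by
    intro b c
    have hz0 : (fun w => pd c u w ⬝ᵥ nrm u w) = fun _ => (0:ℝ) := by
      funext w
      unfold nrm
      fin_cases c
      · exact dot_self_cross _ _
      · exact dot_cross_self _ _
    have hd := fderiv_dot (hdpd c) hdn (Pi.single b 1)
    have h0 : fderiv ℝ (fun w => pd c u w ⬝ᵥ nrm u w) z = 0 := by
      rw [hz0]; simp
    rw [h0] at hd
    simp only [ContinuousLinearMap.zero_apply] at hd
    have hs : sff u z c b = pd c u z ⬝ᵥ pd b (nrm u) z := rfl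
    rw [dotProduct_comm] at hd
    show nrm u z ⬝ᵥ fderiv ℝ (pd c u) z (Pi.single b 1) = _
    rw [hs]
    simp only [pd] at *
    linarith
  have hsffs : ∀ a b : Fin 2, sff u z a b = sff u z b a := by
    intro a b
    have h1 := hNdd b a
    have h2 := hNdd a b
    rw [hsym b a] at h1
    linarith
  -- the third column
  have hcol3 : (1 / h) • deriv (fun t => ansatz u α g h t z) x3 = nrm u z := by
    have hd : HasDerivAt (fun t : ℝ => ansatz u α g h t z) (h • ((1:ℝ) • nrm u z)) x3 := by
      unfold ansatz
      exact HasDerivAt.const_add (u z)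
        ((((((hasDerivAt_id x3).add_const (α z)).smul_const (nrm u z)).add_const
          (g z 0 • pd 0 u z)).add_const (g z 1 • pd 1 u z)).const_smul h)
    rw [hd.deriv, one_smul, smul_smul, one_div, inv_mul_cancel₀ (ne_of_gt hh), one_smul]
  -- the in-plane columns
  have hF : ∀ b : Fin 2, pd b (fun z' => ansatz u α g h x3 z') z
      = pd b u z + h • ((x3 + α z) • pd b (nrm u) z + (fderiv ℝ α z (Pi.single b 1)) • nrm u z
        + (g z 0 • pd b (pd 0 u) z + (fderiv ℝ g z (Pi.single b 1) 0) • pd 0 u z)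
        + (g z 1 • pd b (pd 1 u) z + (fderiv ℝ g z (Pi.single b 1) 1) • pd 1 u z)) := by
    intro b
    have hca : HasFDerivAt (fun w => x3 + α w) (fderiv ℝ α z) z := hα1.hasFDerivAt.const_add x3
    have hG0 : DifferentiableAt ℝ (fun w => g w 0) z := diffAt_comp 0 hg1
    have hG1 : DifferentiableAt ℝ (fun w => g w 1) z := diffAt_comp 1 hg1
    have hA : HasFDerivAt (fun z' => ansatz u α g h x3 z')
        ((fderiv ℝ u z) + h • ((((x3 + α z) • fderiv ℝ (nrm u) z
            + (fderiv ℝ α z).smulRight (nrm u z))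
          + (g z 0 • fderiv ℝ (pd 0 u) z
            + (fderiv ℝ (fun w => g w 0) z).smulRight (pd 0 u z)))
          + (g z 1 • fderiv ℝ (pd 1 u) z
            + (fderiv ℝ (fun w => g w 1) z).smulRight (pd 1 u z)))) z := by
      unfold ansatz
      exact hud.hasFDerivAt.add
        ((((hca.smul hdn.hasFDerivAt).add
          (hG0.hasFDerivAt.smul (hdpd 0).hasFDerivAt)).add
          (hG1.hasFDerivAt.smul (hdpd 1).hasFDerivAt)).const_smul h)
    show fderiv ℝ (fun z' => ansatz u α g h x3 z') z (Pi.single b 1) = _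
    rw [hA.fderiv]
    simp only [ContinuousLinearMap.add_apply, ContinuousLinearMap.coe_smul',
      Pi.smul_apply, ContinuousLinearMap.smulRight_apply,
      fderiv_comp_apply (f := g) 0 (Pi.single b 1) hg1,
      fderiv_comp_apply (f := g) 1 (Pi.single b 1) hg1]
    rfl
  -- dot products with the columns
  have hsfdef : ∀ a b : Fin 2, pd a u z ⬝ᵥ pd b (nrm u) z = sff u z a b := fun _ _ => rfl
  have dotb : ∀ a b : Fin 2, pd a u z ⬝ᵥ pd b (fun z' => ansatz u α g h x3 z') z
      = (if a = b then (1:ℝ) else 0)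
        + h * (x3 * sff u z a b
          + (fderiv ℝ g z (Pi.single b 1) a + α z * sff u z a b)) := by
    intro a b
    rw [hF b]
    simp only [dotProduct_add, dotProduct_smul, smul_eq_mul]
    rw [hiso z hz a b, hN0 a, hT a b 0, hT a b 1, hsfdef a b,
      hiso z hz a 0, hiso z hz a 1]
    fin_cases a <;> fin_cases b <;> simp only [Fin.zero_eta, Fin.mk_one, Fin.isValue, reduceIte, Fin.reduceEq] <;> ring
  have dotn : ∀ b : Fin 2, nrm u z ⬝ᵥ pd b (fun z' => ansatz u α g h x3 z') z
      = h * (fderiv ℝ α z (Pi.single b 1)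
          - (sff u z b 0 * g z 0 + sff u z b 1 * g z 1)) := by
    intro b
    rw [hF b]
    simp only [dotProduct_add, dotProduct_smul, smul_eq_mul]
    have hn0' : ∀ a : Fin 2, nrm u z ⬝ᵥ pd a u z = 0 := by
      intro a; rw [dotProduct_comm]; exact hN0 a
    simp only [hn0', hNdd b 0, hNdd b 1, hNdN b, hNN z hz, hsffs 0 b, hsffs 1 b]
    ring
  -- entrywise identification
  have key : ∀ i j : Fin 3, ((Rmat u z)ᵀ * scaledGradAnsatz u α g h x3 z) i j
      = ![pd 0 u z, pd 1 u z, nrm u z] i ⬝ᵥ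
        ![pd 0 (fun z' => ansatz u α g h x3 z') z,
          pd 1 (fun z' => ansatz u α g h x3 z') z,
          (1 / h) • deriv (fun t => ansatz u α g h t z) x3] j := by
    intro i j
    simp [Matrix.mul_apply, Rmat, scaledGradAnsatz, Matrix.transpose_apply,
      dotProduct, Fin.sum_univ_three]
  have hRHS : (1 : Matrix (Fin 3) (Fin 3) ℝ) + h • Gfield u α g x3 z = Matrix.of ![
      ![1 + h * (x3 * sff u z 0 0 + (fderiv ℝ g z (Pi.single 0 1) 0 + α z * sff u z 0 0)),
        h * (x3 * sff u z 0 1 + (fderiv ℝ g z (Pi.single 1 1) 0 + α z * sff u z 0 1)), 0],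
      ![h * (x3 * sff u z 1 0 + (fderiv ℝ g z (Pi.single 0 1) 1 + α z * sff u z 1 0)),
        1 + h * (x3 * sff u z 1 1 + (fderiv ℝ g z (Pi.single 1 1) 1 + α z * sff u z 1 1)), 0],
      ![h * (fderiv ℝ α z (Pi.single 0 1) - (sff u z 0 0 * g z 0 + sff u z 0 1 * g z 1)),
        h * (fderiv ℝ α z (Pi.single 1 1) - (sff u z 1 0 * g z 0 + sff u z 1 1 * g z 1)), 1]] := by
    ext i j
    fin_cases i <;> fin_cases j <;>
      simp [Gfield, Bfield, bfield, Matrix.one_apply, Fin.sum_univ_two, Matrix.vecHead,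
        Matrix.vecTail] <;>
      first | ring1 | exact Or.inl trivial | exact Or.inr (by ring1) | exact Or.inl (by ring1)
  rw [hRHS]
  ext i j
  rw [key i j]
  have h2 : (⟨2, by norm_num⟩ : Fin 3) = 2 := rfl
  fin_cases i <;> fin_cases j <;>
    simp only [Fin.isValue, Fin.zero_eta, Fin.mk_one, h2, Matrix.cons_val_zero,
      Matrix.cons_val_one, Matrix.head_cons, Matrix.cons_val_two, Matrix.tail_cons,
      Matrix.of_apply, hcol3]
  · rw [dotb 0 0]; norm_num
  · rw [dotb 0 1]; norm_num
  · exact hN0 0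
  · rw [dotb 1 0]; norm_num
  · rw [dotb 1 1]; norm_num
  · exact hN0 1
  · exact dotn 0
  · exact dotn 1
  · exact hNN z hz

end
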